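/- Theorem (soundness and completeness for T_uniq): for every signature S, the axiom system AX_uniq(S) is sound and complete for the language L_uniq(S) with respect to the class T_uniq(S); that is, a formula of L_uniq(S) is provable in AX_uniq(S) if and only if it is true in every causal model in T_uniq(S). -/

import Mathlib

/-- A signature `S = (U, V, R)`: finite (disjoint) sets of exogenous variables `U` and
endogenous variables `V`, together with a nonempty finite set (here: type) of possible
values for each variable. -/
structure Signature where
  U : Type
  V : Type
  uFin : Fintype U
  vFin : Fintype V
  vDecEq : DecidableEq V
  valU : U → Type
  valV : V → Type
  valUFin : ∀ u, Fintype (valU u)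
  valVFin : ∀ X, Fintype (valV X)
  valUNonempty : ∀ u, Nonempty (valU u)
  valVNonempty : ∀ X, Nonempty (valV X)

attribute [instance] Signature.uFin Signature.vFin Signature.vDecEq
  Signature.valUFin Signature.valVFin Signature.valUNonempty Signature.valVNonempty

/-- The standing assumption `|R(Y)| ≥ 2` for every variable `Y`. -/
def Signature.Standard (S : Signature) : Prop :=
  (∀ u, 2 ≤ Fintype.card (S.valU u)) ∧ (∀ X, 2 ≤ Fintype.card (S.valV X))

/-- A setting `u⃗` of values for all the exogenous variables. -/
abbrev Signature.Context (S : Signature) : Type := ∀ u : S.U, S.valU u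

/-- An assignment of values to all the endogenous variables. -/
abbrev Signature.Assignment (S : Signature) : Type := ∀ X : S.V, S.valV X

/-- An intervention `X⃗ ← x⃗`: a vector of distinct endogenous variables together with
values for them, encoded as a partial assignment. -/
abbrev Signature.Intervention (S : Signature) : Type := ∀ X : S.V, Option (S.valV X)

/-- The empty intervention (`[true]`). -/
def Signature.emptyInt (S : Signature) : S.Intervention := fun _ => none

/-- Extend an intervention by additionally setting `W` to `w`. -/
def intUpdate {S : Signature} (g : S.Intervention) (W : S.V) (w : S.valV W) :
    S.Intervention :=
  fun X => if h : X = W then some (cast (congrArg S.valV h).symm w) else g X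

/-- A causal model `T = (S, F)` over the signature `S`. -/
structure CausalModel (S : Signature) where
  F : ∀ X : S.V, S.Context → (∀ Y : S.V, Y ≠ X → S.valV Y) → S.valV X

/-- `v` is a solution of `T_{X⃗ ← x⃗}(u⃗)` (intervention encoded by `g`): intervened
variables take their set values, and every other variable satisfies its equation. -/
def CausalModel.IsSolution {S : Signature} (T : CausalModel S) (g : S.Intervention)
    (u : S.Context) (v : S.Assignment) : Prop :=
  ∀ X : S.V,
    (∀ x, g X = some x → v X = x) ∧
    (g X = none → v X = T.F X u fun Y _ => v Y)

/-- `T ∈ T_uniq(S)`: the equations of `T_{X⃗ ← x⃗}(u⃗)` have a unique solution, for every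
intervention and every context. -/
def CausalModel.UniqueSolutions {S : Signature} (T : CausalModel S) : Prop :=
  ∀ (g : S.Intervention) (u : S.Context), ∃! v : S.Assignment, T.IsSolution g u v

/-- `T ∈ T_rec(S)`: there is a (strict) total order `≺` on `V` such that `F_X` is
independent of the value of `Y` whenever `X ≺ Y`. -/
def CausalModel.Recursive {S : Signature} (T : CausalModel S) : Prop :=
  ∃ r : S.V → S.V → Prop, IsStrictTotalOrder S.V r ∧
    ∀ (X : S.V) (u : S.Context) (w w' : ∀ Y : S.V, Y ≠ X → S.valV Y),
      (∀ (Y : S.V) (h : Y ≠ X), ¬ r X Y → w Y h = w' Y h) →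
      T.F X u w = T.F X u w'

/-- Boolean combinations of atoms of the form `X(u⃗) = x`. -/
inductive IForm (S : Signature) : Type where
  | atom : (X : S.V) → S.Context → S.valV X → IForm S
  | not : IForm S → IForm S
  | and : IForm S → IForm S → IForm S
  | or : IForm S → IForm S → IForm S

namespace IForm

variable {S : Signature}

/-- The settings `u⃗` of the exogenous variables mentioned in a formula. -/
def mentions : IForm S → Set S.Context
  | atom _ u _ => {u}
  | not φ => φ.mentions
  | and φ ψ => φ.mentions ∪ ψ.mentions
  | or φ ψ => φ.mentions ∪ ψ.mentions

/-- The endogenous variables appearing in a formula. -/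
def vars : IForm S → Set S.V
  | atom X _ _ => {X}
  | not φ => φ.vars
  | and φ ψ => φ.vars ∪ ψ.vars
  | or φ ψ => φ.vars ∪ ψ.vars

/-- Evaluate a Boolean combination of atoms, where the atoms mentioning `u⃗` are
evaluated in the assignment `σ u⃗`. -/
def eval (σ : S.Context → S.Assignment) : IForm S → Prop
  | atom X u x => σ u X = x
  | not φ => ¬ φ.eval σ
  | and φ ψ => φ.eval σ ∧ ψ.eval σ
  | or φ ψ => φ.eval σ ∨ ψ.eval σ

def imp (φ ψ : IForm S) : IForm S := or (not φ) ψ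

/-- `φ ∧ ψ₁ ∧ … ∧ ψₙ`. -/
def conj (φ : IForm S) : List (IForm S) → IForm S
  | [] => φ
  | ψ :: l => and φ (conj ψ l)

/-- `φ ∨ ψ₁ ∨ … ∨ ψₙ`. -/
def disj (φ : IForm S) : List (IForm S) → IForm S
  | [] => φ
  | ψ :: l => or φ (disj ψ l)

/-- Evaluation under an arbitrary truth assignment to the atoms. -/
def pEval (val : ∀ X : S.V, S.Context → S.valV X → Prop) : IForm S → Prop
  | atom X u x => val X u x
  | not φ => ¬ φ.pEval val
  | and φ ψ => φ.pEval val ∧ ψ.pEval val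
  | or φ ψ => φ.pEval val ∨ ψ.pEval val

/-- An instance of a propositional tautology. -/
def Tautology (φ : IForm S) : Prop := ∀ val, φ.pEval val

theorem mentions_nonempty : ∀ φ : IForm S, φ.mentions.Nonempty
  | atom _ u _ => ⟨u, rfl⟩
  | not φ => mentions_nonempty φ
  | and φ _ => (mentions_nonempty φ).imp fun _ h => Set.mem_union_left _ h
  | or φ _ => (mentions_nonempty φ).imp fun _ h => Set.mem_union_left _ h

end IForm

/-- `T ⊨ [X⃗ ← x⃗] φ` : for every choice, for each mentioned setting `u⃗`, of a solution
of `T_{X⃗ ← x⃗}(u⃗)`, the formula `φ` evaluates to true. -/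
def CausalModel.boxSat {S : Signature} (T : CausalModel S) (g : S.Intervention)
    (φ : IForm S) : Prop :=
  ∀ σ : S.Context → S.Assignment,
    (∀ u ∈ φ.mentions, T.IsSolution g u (σ u)) → φ.eval σ

/-- The language `L⁺(S)`: Boolean combinations of basic causal formulas `[Y⃗ ← y⃗] φ`. -/
inductive LPlus (S : Signature) : Type where
  | box : S.Intervention → IForm S → LPlus S
  | not : LPlus S → LPlus S
  | and : LPlus S → LPlus S → LPlus S
  | or : LPlus S → LPlus S → LPlus S

namespace LPlus

variable {S : Signature}

/-- Truth of a causal formula in a causal model. -/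
def sat : LPlus S → CausalModel S → Prop
  | box g φ, T => T.boxSat g φ
  | not φ, T => ¬ φ.sat T
  | and φ ψ, T => φ.sat T ∧ ψ.sat T
  | or φ ψ, T => φ.sat T ∨ ψ.sat T

/-- `⟨X⃗ ← x⃗⟩ φ` abbreviates `¬ [X⃗ ← x⃗] ¬ φ`. -/
def dia (g : S.Intervention) (φ : IForm S) : LPlus S := not (box g (IForm.not φ))

def imp (φ ψ : LPlus S) : LPlus S := or (not φ) ψ

def iff (φ ψ : LPlus S) : LPlus S := and (imp φ ψ) (imp ψ φ)

def conj (φ : LPlus S) : List (LPlus S) → LPlus S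
  | [] => φ
  | ψ :: l => and φ (conj ψ l)

def disj (φ : LPlus S) : List (LPlus S) → LPlus S
  | [] => φ
  | ψ :: l => or φ (disj ψ l)

/-- Membership in the sublanguage `L_uniq(S)`: Boolean combinations of formulas of the
form `[Y⃗ ← y⃗](X(u⃗) = x)`. -/
def InLuniq : LPlus S → Prop
  | box _ φ => ∃ (X : S.V) (u : S.Context) (x : S.valV X), φ = IForm.atom X u x
  | not φ => φ.InLuniq
  | and φ ψ => φ.InLuniq ∧ ψ.InLuniq
  | or φ ψ => φ.InLuniq ∧ ψ.InLuniq

/-- Evaluation under an arbitrary truth assignment to the basic causal formulas. -/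
def pEval (val : S.Intervention → IForm S → Prop) : LPlus S → Prop
  | box g φ => val g φ
  | not φ => ¬ φ.pEval val
  | and φ ψ => φ.pEval val ∧ ψ.pEval val
  | or φ ψ => φ.pEval val ∨ ψ.pEval val

/-- An instance of a propositional tautology. -/
def Tautology (φ : LPlus S) : Prop := ∀ val, φ.pEval val

/-- The endogenous variables appearing in a causal formula (including the variables
set by its interventions). -/
def vars : LPlus S → Set S.V
  | box g φ => {X | g X ≠ none} ∪ φ.vars
  | not φ => φ.vars
  | and φ ψ => φ.vars ∪ ψ.vars
  | or φ ψ => φ.vars ∪ ψ.vars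

/-- The settings of the exogenous variables mentioned in a causal formula. -/
def contexts : LPlus S → Set S.Context
  | box _ φ => φ.mentions
  | not φ => φ.contexts
  | and φ ψ => φ.contexts ∪ ψ.contexts
  | or φ ψ => φ.contexts ∪ ψ.contexts

theorem contexts_nonempty : ∀ φ : LPlus S, φ.contexts.Nonempty
  | box _ φ => φ.mentions_nonempty
  | not φ => contexts_nonempty φ
  | and φ _ => (contexts_nonempty φ).imp fun _ h => Set.mem_union_left _ h
  | or φ _ => (contexts_nonempty φ).imp fun _ h => Set.mem_union_left _ h

end LPlus

/-- `Y` affects `Z` in `T`: for some setting of the exogenous variables and of some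
other endogenous variables, changing the value of `Y` changes the value of `Z`. -/
def CausalModel.Affects {S : Signature} (T : CausalModel S) (Y Z : S.V) : Prop :=
  Y ≠ Z ∧ ∃ (g : S.Intervention) (y : S.valV Y) (u : S.Context) (z z' : S.valV Z),
    g Y = none ∧ g Z = none ∧ z ≠ z' ∧
    T.boxSat (intUpdate g Y y) (IForm.atom Z u z') ∧ T.boxSat g (IForm.atom Z u z)

/-- Provability from a set of axioms using modus ponens. -/
inductive Provable {S : Signature} (Ax : Set (LPlus S)) : LPlus S → Prop
  | ax : ∀ {φ}, φ ∈ Ax → Provable Ax φ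
  | mp : ∀ {φ ψ}, Provable Ax (φ.imp ψ) → Provable Ax φ → Provable Ax ψ

/-! ### The axiom system `AX_uniq(S)` / `AX_rec(S)` for the language `L_uniq(S)` -/

/-- C0: all instances of propositional tautologies (in the language `L_uniq(S)`). -/
def C0Ax (S : Signature) : Set (LPlus S) := {φ | φ.Tautology ∧ φ.InLuniq}

/-- C1 (equality): `X_{y⃗}(u⃗) = x ⇒ ¬(X_{y⃗}(u⃗) = x')` for distinct `x, x'`. -/
def C1Ax (S : Signature) : Set (LPlus S) :=
  {φ | ∃ (g : S.Intervention) (X : S.V) (u : S.Context) (x x' : S.valV X),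
    x ≠ x' ∧
    φ = (LPlus.box g (IForm.atom X u x)).imp (LPlus.not (LPlus.box g (IForm.atom X u x')))}

/-- C2 (definiteness): `∨_{x ∈ R(X)} X_{y⃗}(u⃗) = x`. -/
def C2Ax (S : Signature) : Set (LPlus S) :=
  {φ | ∃ (g : S.Intervention) (X : S.V) (u : S.Context) (x : S.valV X) (l : List (S.valV X)),
    (x :: l).Nodup ∧ (∀ y : S.valV X, y ∈ x :: l) ∧
    φ = (LPlus.box g (IForm.atom X u x)).disj (l.map fun y => LPlus.box g (IForm.atom X u y))}

/-- C3 (composition): `(W_{x⃗}(u⃗) = w ∧ Y_{x⃗}(u⃗) = y) ⇒ Y_{x⃗w}(u⃗) = y`. -/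
def C3Ax (S : Signature) : Set (LPlus S) :=
  {φ | ∃ (g : S.Intervention) (W Y : S.V) (u : S.Context) (w : S.valV W) (y : S.valV Y),
    g W = none ∧ g Y = none ∧ W ≠ Y ∧
    φ = (LPlus.and (LPlus.box g (IForm.atom W u w)) (LPlus.box g (IForm.atom Y u y))).imp
          (LPlus.box (intUpdate g W w) (IForm.atom Y u y))}

/-- C4 (effectiveness): `X_{x w⃗}(u⃗) = x` where `X` is one of the set variables. -/
def C4Ax (S : Signature) : Set (LPlus S) :=
  {φ | ∃ (g : S.Intervention) (X : S.V) (u : S.Context) (x : S.valV X),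
    g X = some x ∧ φ = LPlus.box g (IForm.atom X u x)}

/-- C5 (reversibility): `(Y_{x⃗w}(u⃗) = y ∧ W_{x⃗y}(u⃗) = w) ⇒ Y_{x⃗}(u⃗) = y`. -/
def C5Ax (S : Signature) : Set (LPlus S) :=
  {φ | ∃ (g : S.Intervention) (W Y : S.V) (u : S.Context) (w : S.valV W) (y : S.valV Y),
    g W = none ∧ g Y = none ∧ W ≠ Y ∧
    φ = (LPlus.and (LPlus.box (intUpdate g W w) (IForm.atom Y u y))
                   (LPlus.box (intUpdate g Y y) (IForm.atom W u w))).imp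
          (LPlus.box g (IForm.atom Y u y))}

/-- A single disjunct `Z_{x⃗y}(u⃗) = z' ∧ Z_{x⃗}(u⃗) = z` (with `z ≠ z'`) of the
formula `Y ⤳ Z`. -/
def AffDisjunct (S : Signature) (Y Z : S.V) (φ : LPlus S) : Prop :=
  ∃ (g : S.Intervention) (y : S.valV Y) (u : S.Context) (z z' : S.valV Z),
    g Y = none ∧ g Z = none ∧ z ≠ z' ∧
    φ = LPlus.and (LPlus.box (intUpdate g Y y) (IForm.atom Z u z'))
                  (LPlus.box g (IForm.atom Z u z))

/-- `φ` is the formula `Y ⤳ Z` (`Y` affects `Z`): the disjunction, over all settings of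
the exogenous variables and of other endogenous variables, of all the disjuncts
`Z_{x⃗y}(u⃗) = z' ∧ Z_{x⃗}(u⃗) = z` with `z ≠ z'`. -/
def IsAffectsFormula (S : Signature) (Y Z : S.V) (φ : LPlus S) : Prop :=
  Y ≠ Z ∧ ∃ (ψ : LPlus S) (l : List (LPlus S)), (ψ :: l).Nodup ∧
    (∀ χ : LPlus S, χ ∈ ψ :: l ↔ AffDisjunct S Y Z χ) ∧ φ = ψ.disj l

/-- C6 (recursiveness): `(X_0 ⤳ X_1 ∧ … ∧ X_{k-1} ⤳ X_k) ⇒ ¬(X_k ⤳ X_0)`. -/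
def C6Ax (S : Signature) : Set (LPlus S) :=
  {φ | ∃ (k : ℕ) (Xs : Fin (k + 2) → S.V) (A : Fin (k + 1) → LPlus S) (B : LPlus S),
    (∀ i : Fin (k + 1), IsAffectsFormula S (Xs i.castSucc) (Xs i.succ) (A i)) ∧
    IsAffectsFormula S (Xs (Fin.last (k + 1))) (Xs 0) B ∧
    φ = ((A 0).conj (List.ofFn A).tail).imp (LPlus.not B)}

/-- The axiom system `AX_uniq(S)`: C0–C5 (with modus ponens as inference rule). -/
def AXuniq (S : Signature) : Set (LPlus S) :=
  C0Ax S ∪ C1Ax S ∪ C2Ax S ∪ C3Ax S ∪ C4Ax S ∪ C5Ax S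

/-- The axiom system `AX_rec(S)`: C0–C4 and C6 (with modus ponens). -/
def AXrec (S : Signature) : Set (LPlus S) :=
  C0Ax S ∪ C1Ax S ∪ C2Ax S ∪ C3Ax S ∪ C4Ax S ∪ C6Ax S

/-! ### Auxiliary development -/

attribute [local instance] Classical.propDecidable

section Aux

variable {S : Signature}

theorem intUpdate_self (g : S.Intervention) (W : S.V) (w : S.valV W) :
    intUpdate g W w W = some w := by
  simp [intUpdate]

theorem intUpdate_ne (g : S.Intervention) {X W : S.V} (h : X ≠ W) (w : S.valV W) :
    intUpdate g W w X = g X := by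
  simp [intUpdate, h]

theorem intUpdate_comm (g : S.Intervention) {W Y : S.V} (h : W ≠ Y)
    (w : S.valV W) (y : S.valV Y) :
    intUpdate (intUpdate g W w) Y y = intUpdate (intUpdate g Y y) W w := by
  funext X
  by_cases hY : X = Y
  · subst hY
    rw [intUpdate_self, intUpdate_ne _ (Ne.symm h), intUpdate_self]
  · by_cases hW : X = W
    · subst hW
      rw [intUpdate_ne _ hY, intUpdate_self, intUpdate_self]
    · rw [intUpdate_ne _ hY, intUpdate_ne _ hW, intUpdate_ne _ hW, intUpdate_ne _ hY]

/-- The unique solution of `T_g(u)` for a model with unique solutions. -/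
noncomputable def CausalModel.sol (T : CausalModel S) (hT : T.UniqueSolutions)
    (g : S.Intervention) (u : S.Context) : S.Assignment :=
  (hT g u).exists.choose

theorem CausalModel.sol_isSolution (T : CausalModel S) (hT : T.UniqueSolutions)
    (g : S.Intervention) (u : S.Context) : T.IsSolution g u (T.sol hT g u) :=
  (hT g u).exists.choose_spec

theorem CausalModel.sol_unique (T : CausalModel S) (hT : T.UniqueSolutions)
    {g : S.Intervention} {u : S.Context} {v : S.Assignment}
    (hv : T.IsSolution g u v) : v = T.sol hT g u :=
  (hT g u).unique hv (T.sol_isSolution hT g u)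

theorem boxSat_atom_iff (T : CausalModel S) (hT : T.UniqueSolutions)
    (g : S.Intervention) (X : S.V) (u : S.Context) (x : S.valV X) :
    T.boxSat g (IForm.atom X u x) ↔ T.sol hT g u X = x := by
  constructor
  · intro h
    exact h (fun u' => T.sol hT g u') (fun u' _ => T.sol_isSolution hT g u')
  · intro h σ hσ
    have h1 : T.IsSolution g u (σ u) := hσ u rfl
    have h2 : σ u = T.sol hT g u := T.sol_unique hT h1
    show σ u X = x
    rw [h2, h]

theorem sat_imp (T : CausalModel S) (a b : LPlus S) :
    (a.imp b).sat T ↔ (a.sat T → b.sat T) := by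
  show (¬ a.sat T ∨ b.sat T) ↔ _
  tauto

theorem sat_iff_pEval (T : CausalModel S) : ∀ φ : LPlus S, φ.sat T ↔ φ.pEval T.boxSat
  | LPlus.box g ψ => Iff.rfl
  | LPlus.not φ => by
      show ¬ φ.sat T ↔ ¬ _
      rw [sat_iff_pEval T φ]
  | LPlus.and φ ψ => by
      show φ.sat T ∧ ψ.sat T ↔ _ ∧ _
      rw [sat_iff_pEval T φ, sat_iff_pEval T ψ]
  | LPlus.or φ ψ => by
      show φ.sat T ∨ ψ.sat T ↔ _ ∨ _
      rw [sat_iff_pEval T φ, sat_iff_pEval T ψ]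

theorem pEval_imp (val : S.Intervention → IForm S → Prop) (a b : LPlus S) :
    (a.imp b).pEval val ↔ (a.pEval val → b.pEval val) := by
  show (¬ a.pEval val ∨ b.pEval val) ↔ _
  tauto

theorem pEval_disj (val : S.Intervention → IForm S → Prop) (a : LPlus S) :
    ∀ l : List (LPlus S),
      (a.disj l).pEval val ↔ (a.pEval val ∨ ∃ b ∈ l, b.pEval val)
  | [] => by simp [LPlus.disj]
  | b :: l => by
      show (a.pEval val ∨ (b.disj l).pEval val) ↔ _
      rw [pEval_disj val b l]
      simp only [List.mem_cons]
      constructor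
      · rintro (h | h | ⟨c, hc, h⟩)
        · exact Or.inl h
        · exact Or.inr ⟨b, Or.inl rfl, h⟩
        · exact Or.inr ⟨c, Or.inr hc, h⟩
      · rintro (h | ⟨c, (rfl | hc), h⟩)
        · exact Or.inl h
        · exact Or.inr (Or.inl h)
        · exact Or.inr (Or.inr ⟨c, hc, h⟩)

theorem sat_disj (T : CausalModel S) (a : LPlus S) (l : List (LPlus S)) :
    (a.disj l).sat T ↔ (a.sat T ∨ ∃ b ∈ l, b.sat T) := by
  rw [sat_iff_pEval, pEval_disj]
  simp only [← sat_iff_pEval]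

/-- If `v` solves `T_g(u)` and `v W = w` then `v` solves `T_{g, W ← w}(u)`. -/
theorem isSolution_intUpdate_of {T : CausalModel S} {g : S.Intervention}
    {u : S.Context} {v : S.Assignment} (h : T.IsSolution g u v)
    {W : S.V} {w : S.valV W} (hW : v W = w) :
    T.IsSolution (intUpdate g W w) u v := by
  intro X
  by_cases hX : X = W
  · subst hX
    constructor
    · intro x hx
      rw [intUpdate_self] at hx
      cases hx
      exact hW
    · intro hnone
      rw [intUpdate_self] at hnone
      cases hnone
  · constructor
    · intro x hx
      rw [intUpdate_ne _ hX] at hx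
      exact (h X).1 x hx
    · intro hnone
      rw [intUpdate_ne _ hX] at hnone
      exact (h X).2 hnone

/-- If `v` solves `T_{g, W ← w}(u)`, `g W = none`, and `v` satisfies the equation
for `W`, then `v` solves `T_g(u)`. -/
theorem isSolution_of_intUpdate {T : CausalModel S} {g : S.Intervention}
    {u : S.Context} {v : S.Assignment} {W : S.V} {w : S.valV W}
    (h : T.IsSolution (intUpdate g W w) u v) (hg : g W = none)
    (heq : v W = T.F W u fun Y _ => v Y) :
    T.IsSolution g u v := by
  intro X
  by_cases hX : X = W
  · subst hX
    constructor
    · intro x hx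
      rw [hg] at hx
      cases hx
    · intro _
      exact heq
  · constructor
    · intro x hx
      exact (h X).1 x (by rw [intUpdate_ne _ hX]; exact hx)
    · intro hnone
      exact (h X).2 (by rw [intUpdate_ne _ hX]; exact hnone)

end Aux

/-! ### Soundness -/

section Soundness

variable {S : Signature} {T : CausalModel S}

theorem valid_C0 {φ : LPlus S} (h : φ ∈ C0Ax S) : φ.sat T := by
  rw [sat_iff_pEval]
  exact h.1 T.boxSat

theorem valid_C1 (hT : T.UniqueSolutions) {φ : LPlus S} (h : φ ∈ C1Ax S) : φ.sat T := by
  obtain ⟨g, X, u, x, x', hne, rfl⟩ := h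
  rw [sat_imp]
  intro h1
  show ¬ T.boxSat g (IForm.atom X u x')
  rw [boxSat_atom_iff T hT]
  have : T.sol hT g u X = x := (boxSat_atom_iff T hT g X u x).1 h1
  rw [this]
  exact hne

theorem valid_C2 (hT : T.UniqueSolutions) {φ : LPlus S} (h : φ ∈ C2Ax S) : φ.sat T := by
  obtain ⟨g, X, u, x, l, -, hall, rfl⟩ := h
  rw [sat_disj]
  have hmem := hall (T.sol hT g u X)
  rcases List.mem_cons.1 hmem with h1 | h1
  · left
    exact (boxSat_atom_iff T hT g X u x).2 h1
  · right
    refine ⟨LPlus.box g (IForm.atom X u (T.sol hT g u X)), List.mem_map.2 ⟨_, h1, rfl⟩, ?_⟩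
    exact (boxSat_atom_iff T hT g X u _).2 rfl

theorem valid_C3 (hT : T.UniqueSolutions) {φ : LPlus S} (h : φ ∈ C3Ax S) : φ.sat T := by
  obtain ⟨g, W, Y, u, w, y, hgW, hgY, hWY, rfl⟩ := h
  rw [sat_imp]
  rintro ⟨h1, h2⟩
  have hW : T.sol hT g u W = w := (boxSat_atom_iff T hT g W u w).1 h1
  have hY : T.sol hT g u Y = y := (boxSat_atom_iff T hT g Y u y).1 h2
  show T.boxSat (intUpdate g W w) (IForm.atom Y u y)
  rw [boxSat_atom_iff T hT]
  have hsol : T.IsSolution (intUpdate g W w) u (T.sol hT g u) :=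
    isSolution_intUpdate_of (T.sol_isSolution hT g u) hW
  rw [← T.sol_unique hT hsol]
  exact hY

theorem valid_C4 {φ : LPlus S} (h : φ ∈ C4Ax S) : φ.sat T := by
  obtain ⟨g, X, u, x, hg, rfl⟩ := h
  intro σ hσ
  have h1 : T.IsSolution g u (σ u) := hσ u rfl
  exact (h1 X).1 x hg

theorem valid_C5 (hT : T.UniqueSolutions) {φ : LPlus S} (h : φ ∈ C5Ax S) : φ.sat T := by
  obtain ⟨g, W, Y, u, w, y, hgW, hgY, hWY, rfl⟩ := h
  rw [sat_imp]
  rintro ⟨h1, h2⟩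
  set A := T.sol hT (intUpdate g W w) u with hA
  set B := T.sol hT (intUpdate g Y y) u with hB
  have hAY : A Y = y := (boxSat_atom_iff T hT _ Y u y).1 h1
  have hBW : B W = w := (boxSat_atom_iff T hT _ W u w).1 h2
  -- both A and B solve the doubly-updated system
  have hAsol : T.IsSolution (intUpdate (intUpdate g W w) Y y) u A :=
    isSolution_intUpdate_of (T.sol_isSolution hT _ u) hAY
  have hBsol : T.IsSolution (intUpdate (intUpdate g W w) Y y) u B := by
    rw [intUpdate_comm g hWY]
    exact isSolution_intUpdate_of (T.sol_isSolution hT _ u) hBW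
  have hAB : A = B := by
    rw [T.sol_unique hT hAsol, T.sol_unique hT hBsol]
  -- A satisfies the equation for W
  have hWeq : A W = T.F W u fun Z _ => A Z := by
    rw [hAB]
    have := (T.sol_isSolution hT (intUpdate g Y y) u W).2
    rw [intUpdate_ne _ (fun h => hWY h)] at this
    exact this hgW
  have hAg : T.IsSolution g u A :=
    isSolution_of_intUpdate (T.sol_isSolution hT (intUpdate g W w) u) hgW hWeq
  show T.boxSat g (IForm.atom Y u y)
  rw [boxSat_atom_iff T hT, ← T.sol_unique hT hAg]
  exact hAY

theorem sat_of_provable (hT : T.UniqueSolutions) {φ : LPlus S} (h : Provable (AXuniq S) φ) : φ.sat T := by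
  induction h with
  | ax hmem =>
      rcases hmem with ((((h | h) | h) | h) | h) | h
      · exact valid_C0 h
      · exact valid_C1 hT h
      · exact valid_C2 hT h
      · exact valid_C3 hT h
      · exact valid_C4 h
      · exact valid_C5 hT h
  | mp _ _ ih1 ih2 => exact (sat_imp T _ _).1 ih1 ih2

end Soundness

/-! ### Completeness: canonical model construction -/

section Canonical

variable {S : Signature}

/-- A truth assignment to the atoms satisfying the (semantic content of) axioms C1–C5. -/
structure GoodVal (S : Signature) (val : S.Intervention → IForm S → Prop) : Prop where
  h1 : ∀ (g : S.Intervention) (X : S.V) (u : S.Context) (x x' : S.valV X), x ≠ x' →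
    val g (IForm.atom X u x) → ¬ val g (IForm.atom X u x')
  h2 : ∀ (g : S.Intervention) (X : S.V) (u : S.Context), ∃ x, val g (IForm.atom X u x)
  h3 : ∀ (g : S.Intervention) (W Y : S.V) (u : S.Context) (w : S.valV W) (y : S.valV Y),
    g W = none → g Y = none → W ≠ Y →
    val g (IForm.atom W u w) → val g (IForm.atom Y u y) →
    val (intUpdate g W w) (IForm.atom Y u y)
  h4 : ∀ (g : S.Intervention) (X : S.V) (u : S.Context) (x : S.valV X),
    g X = some x → val g (IForm.atom X u x)
  h5 : ∀ (g : S.Intervention) (W Y : S.V) (u : S.Context) (w : S.valV W) (y : S.valV Y),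
    g W = none → g Y = none → W ≠ Y →
    val (intUpdate g W w) (IForm.atom Y u y) → val (intUpdate g Y y) (IForm.atom W u w) →
    val g (IForm.atom Y u y)

variable {val : S.Intervention → IForm S → Prop} (hval : GoodVal S val)

/-- The canonical assignment determined by `val`. -/
noncomputable def fOf (hv : GoodVal S val) (g : S.Intervention) (u : S.Context) :
    S.Assignment :=
  fun X => (hv.h2 g X u).choose

theorem fOf_spec (g : S.Intervention) (u : S.Context) (X : S.V) :
    val g (IForm.atom X u (fOf hval g u X)) :=
  (hval.h2 g X u).choose_spec

theorem fOf_eq {g : S.Intervention} {u : S.Context} {X : S.V} {x : S.valV X}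
    (h : val g (IForm.atom X u x)) : fOf hval g u X = x := by
  by_contra hne
  exact hval.h1 g X u _ x hne (fOf_spec hval g u X) h

theorem fOf_of_some {g : S.Intervention} {u : S.Context} {X : S.V} {x : S.valV X}
    (h : g X = some x) : fOf hval g u X = x :=
  fOf_eq hval (hval.h4 g X u x h)

/-- Extending `g` by setting a free variable to its canonical value does not change
the canonical assignment. -/
theorem fOf_intUpdate {g : S.Intervention} {u : S.Context} {W : S.V}
    (hgW : g W = none) :
    fOf hval (intUpdate g W (fOf hval g u W)) u = fOf hval g u := by
  funext Y
  by_cases hYW : Y = W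
  · subst hYW
    exact fOf_of_some hval (intUpdate_self g Y _)
  · cases hgY : g Y with
    | some y =>
        rw [fOf_of_some hval (show intUpdate g W _ Y = some y by
          rw [intUpdate_ne _ hYW]; exact hgY)]
        rw [fOf_of_some hval hgY]
    | none =>
        have hWY : W ≠ Y := fun h => hYW h.symm
        have := hval.h3 g W Y u (fOf hval g u W) (fOf hval g u Y) hgW hgY hWY
          (fOf_spec hval g u W) (fOf_spec hval g u Y)
        exact fOf_eq hval this

/-- `g'` extends `g` along the assignment `v`. -/
def ExtAlong (g : S.Intervention) (v : S.Assignment) (g' : S.Intervention) : Prop :=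
  ∀ Y, g' Y = g Y ∨ (g Y = none ∧ g' Y = some (v Y))

theorem fOf_extAlong {g : S.Intervention} {u : S.Context} :
    ∀ (n : ℕ) (g' : S.Intervention),
      (Finset.univ.filter fun Y => g Y = none ∧ ¬ g' Y = none).card = n →
      ExtAlong g (fOf hval g u) g' → fOf hval g' u = fOf hval g u := by
  intro n
  induction n with
  | zero =>
      intro g' hcard hext
      have hempty := Finset.card_eq_zero.1 hcard
      have : g' = g := by
        funext Y
        rcases hext Y with h | ⟨h1, h2⟩
        · exact h
        · exfalso
          have : Y ∈ Finset.univ.filter fun Y => g Y = none ∧ ¬ g' Y = none := by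
            simp [h1, h2]
          rw [hempty] at this
          exact absurd this (Finset.notMem_empty Y)
      rw [this]
  | succ n ih =>
      intro g' hcard hext
      have hne : (Finset.univ.filter fun Y => g Y = none ∧ ¬ g' Y = none).Nonempty := by
        rw [← Finset.card_pos, hcard]; omega
      obtain ⟨W, hW⟩ := hne
      simp only [Finset.mem_filter, Finset.mem_univ, true_and] at hW
      obtain ⟨hgW, hg'W⟩ := hW
      set g'' : S.Intervention := fun Y => if Y = W then none else g' Y with hg''
      have hg''W : g'' W = none := by simp [hg'']
      have hext'' : ExtAlong g (fOf hval g u) g'' := by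
        intro Y
        by_cases hYW : Y = W
        · subst hYW; left; simp [hg'', hgW]
        · have : g'' Y = g' Y := by simp [hg'', hYW]
          rw [this]; exact hext Y
      have hcard'' :
          (Finset.univ.filter fun Y => g Y = none ∧ ¬ g'' Y = none).card = n := by
        have hsub : (Finset.univ.filter fun Y => g Y = none ∧ ¬ g'' Y = none) =
            (Finset.univ.filter fun Y => g Y = none ∧ ¬ g' Y = none).erase W := by
          ext Y
          simp only [Finset.mem_filter, Finset.mem_univ, true_and, Finset.mem_erase]
          constructor
          · rintro ⟨hY1, hY2⟩
            have hYW : Y ≠ W := by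
              intro h; subst h; exact hY2 hg''W
            refine ⟨hYW, hY1, ?_⟩
            simpa [hg'', hYW] using hY2
          · rintro ⟨hYW, hY1, hY2⟩
            refine ⟨hY1, ?_⟩
            simpa [hg'', hYW] using hY2
        rw [hsub, Finset.card_erase_of_mem (by simp [hgW, hg'W]), hcard]
        omega
      have hres := ih g'' hcard'' hext''
      have hg'eq : g' = intUpdate g'' W (fOf hval g u W) := by
        funext Y
        by_cases hYW : Y = W
        · subst hYW
          rw [intUpdate_self]
          rcases hext Y with h | ⟨h1, h2⟩
          · exact absurd (h.trans hgW) hg'W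
          · exact h2
        · rw [intUpdate_ne _ hYW]
          simp [hg'', hYW]
      rw [hg'eq, ← hres]
      exact fOf_intUpdate hval hg''W

/-- The intervention setting every variable other than `X` according to `w`. -/
def gAllBut (X : S.V) (w : ∀ Y : S.V, Y ≠ X → S.valV Y) : S.Intervention :=
  fun Y => if hY : Y = X then none else some (w Y hY)

/-- The canonical model determined by `val`. -/
noncomputable def mOf (hval : GoodVal S val) : CausalModel S :=
  ⟨fun X u w => fOf hval (gAllBut X w) u X⟩

theorem mOf_isSolution (g : S.Intervention) (u : S.Context) :
    (mOf hval).IsSolution g u (fOf hval g u) := by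
  intro X
  constructor
  · intro x hx
    exact fOf_of_some hval hx
  · intro hnone
    show fOf hval g u X = fOf hval (gAllBut X fun Y _ => fOf hval g u Y) u X
    have hext : ExtAlong g (fOf hval g u) (gAllBut X fun Y _ => fOf hval g u Y) := by
      intro Y
      by_cases hYX : Y = X
      · subst hYX; left; simp [gAllBut, hnone]
      · have hY : gAllBut X (fun Y _ => fOf hval g u Y) Y = some (fOf hval g u Y) := by
          simp [gAllBut, hYX]
        cases hgY : g Y with
        | some y =>
            left
            simp [hY, fOf_of_some hval hgY, hgY]
        | none => right; exact ⟨rfl, hY⟩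
    exact (congrFun (fOf_extAlong hval _ _ rfl hext) X).symm

theorem mOf_unique_aux :
    ∀ (n : ℕ) (g : S.Intervention), (Finset.univ.filter fun Y => g Y = none).card = n →
      ∀ (u : S.Context) (v : S.Assignment),
        (mOf hval).IsSolution g u v → v = fOf hval g u := by
  intro n
  induction n using Nat.strong_induction_on with
  | _ n ih =>
    intro g hcard u v hv
    funext Y
    cases hgY : g Y with
    | some y =>
        rw [(hv Y).1 y hgY, fOf_of_some hval hgY]
    | none =>
      have hYmem : Y ∈ Finset.univ.filter fun Z => g Z = none := by simp [hgY]
      match n, hcard with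
      | 0, hcard =>
          rw [Finset.card_eq_zero.1 hcard] at hYmem
          exact absurd hYmem (Finset.notMem_empty Y)
      | 1, hcard =>
          -- Y is the only free variable; the equation for Y uses `g` itself
          obtain ⟨Z, hZ⟩ := Finset.card_eq_one.1 hcard
          have hmemiff : ∀ W, g W = none ↔ W = Z := by
            intro W
            constructor
            · intro h
              have : W ∈ Finset.univ.filter fun Z => g Z = none := by simp [h]
              rw [hZ] at this; simpa using this
            · rintro rfl
              have : W ∈ Finset.univ.filter fun Z' => g Z' = none := by
                rw [hZ]; simp
              simpa using this
          have hYZ : Y = Z := (hmemiff Y).1 hgY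
          subst hYZ
          have heq : gAllBut Y (fun W _ => v W) = g := by
            funext W
            by_cases hWY : W = Y
            · subst hWY; simp [gAllBut, hgY]
            · have : ¬ g W = none := fun h => hWY ((hmemiff W).1 h)
              cases hgW : g W with
              | none => exact absurd hgW this
              | some w =>
                  have : v W = w := (hv W).1 w hgW
                  simp [gAllBut, hWY, this]
          have := (hv Y).2 hgY
          rw [show (mOf hval).F Y u (fun W _ => v W) =
            fOf hval (gAllBut Y fun W _ => v W) u Y from rfl, heq] at this
          exact this
      | (m + 2), hcard =>
          -- at least two free variables: use reversibility
          have hcard' : 2 ≤ (Finset.univ.filter fun Z => g Z = none).card := by omega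
          have : ((Finset.univ.filter fun Z => g Z = none).erase Y).Nonempty := by
            rw [← Finset.card_pos, Finset.card_erase_of_mem hYmem]
            omega
          obtain ⟨W, hW⟩ := this
          have hWY : W ≠ Y := (Finset.mem_erase.1 hW).1
          have hgW : g W = none := by
            have := (Finset.mem_erase.1 hW).2
            simpa using this
          have key : ∀ (Z : S.V), g Z = none →
              v = fOf hval (intUpdate g Z (v Z)) u := by
            intro Z hgZ
            have hsol : (mOf hval).IsSolution (intUpdate g Z (v Z)) u v :=
              isSolution_intUpdate_of hv rfl
            have hcZ : (Finset.univ.filter fun W' => intUpdate g Z (v Z) W' = none).card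
                = m + 1 := by
              have hsub : (Finset.univ.filter fun W' => intUpdate g Z (v Z) W' = none) =
                  (Finset.univ.filter fun W' => g W' = none).erase Z := by
                ext W'
                simp only [Finset.mem_filter, Finset.mem_univ, true_and, Finset.mem_erase]
                constructor
                · intro h
                  have hW'Z : W' ≠ Z := by
                    intro hh; subst hh
                    rw [intUpdate_self] at h; cases h
                  rw [intUpdate_ne _ hW'Z] at h
                  exact ⟨hW'Z, h⟩
                · rintro ⟨hW'Z, h⟩
                  rw [intUpdate_ne _ hW'Z]
                  exact h
              rw [hsub, Finset.card_erase_of_mem (by simp [hgZ]), hcard]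
              omega
            exact ih (m + 1) (by omega) _ hcZ u v hsol
          have hprem1 : val (intUpdate g W (v W)) (IForm.atom Y u (v Y)) := by
            have := congrFun (key W hgW) Y
            rw [this]
            exact fOf_spec hval _ u Y
          have hprem2 : val (intUpdate g Y (v Y)) (IForm.atom W u (v W)) := by
            have := congrFun (key Y hgY) W
            rw [this]
            exact fOf_spec hval _ u W
          exact (fOf_eq hval (hval.h5 g W Y u (v W) (v Y) hgW hgY hWY hprem1 hprem2)).symm

theorem mOf_uniqueSolutions : (mOf hval).UniqueSolutions := by
  intro g u
  refine ⟨fOf hval g u, mOf_isSolution hval g u, ?_⟩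
  intro v hv
  exact mOf_unique_aux hval _ g rfl u v hv

theorem mOf_boxSat_atom (g : S.Intervention) (X : S.V) (u : S.Context) (x : S.valV X) :
    (mOf hval).boxSat g (IForm.atom X u x) ↔ val g (IForm.atom X u x) := by
  rw [boxSat_atom_iff (mOf hval) (mOf_uniqueSolutions hval)]
  have hsol : (mOf hval).sol (mOf_uniqueSolutions hval) g u = fOf hval g u :=
    ((mOf hval).sol_unique (mOf_uniqueSolutions hval) (mOf_isSolution hval g u)).symm
  rw [hsol]
  constructor
  · rintro rfl
    exact fOf_spec hval g u X
  · intro h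
    exact fOf_eq hval h

end Canonical

/-! ### Completeness: the syntactic part -/

section Syntactic

variable {S : Signature}

theorem mem_AXuniq_C0 {φ : LPlus S} (h : φ ∈ C0Ax S) : φ ∈ AXuniq S :=
  Or.inl (Or.inl (Or.inl (Or.inl (Or.inl h))))
theorem mem_AXuniq_C1 {φ : LPlus S} (h : φ ∈ C1Ax S) : φ ∈ AXuniq S :=
  Or.inl (Or.inl (Or.inl (Or.inl (Or.inr h))))
theorem mem_AXuniq_C2 {φ : LPlus S} (h : φ ∈ C2Ax S) : φ ∈ AXuniq S :=
  Or.inl (Or.inl (Or.inl (Or.inr h)))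
theorem mem_AXuniq_C3 {φ : LPlus S} (h : φ ∈ C3Ax S) : φ ∈ AXuniq S :=
  Or.inl (Or.inl (Or.inr h))
theorem mem_AXuniq_C4 {φ : LPlus S} (h : φ ∈ C4Ax S) : φ ∈ AXuniq S :=
  Or.inl (Or.inr h)
theorem mem_AXuniq_C5 {φ : LPlus S} (h : φ ∈ C5Ax S) : φ ∈ AXuniq S :=
  Or.inr h

/-- A trivial tautology of `L_uniq(S)`, used as a filler. -/
def trivAx (g : S.Intervention) (X : S.V) (u : S.Context) (x : S.valV X) : LPlus S :=
  (LPlus.box g (IForm.atom X u x)).imp (LPlus.box g (IForm.atom X u x))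

theorem trivAx_inLuniq (g : S.Intervention) (X : S.V) (u : S.Context) (x : S.valV X) :
    (trivAx g X u x).InLuniq :=
  ⟨⟨X, u, x, rfl⟩, ⟨X, u, x, rfl⟩⟩

theorem trivAx_mem (g : S.Intervention) (X : S.V) (u : S.Context) (x : S.valV X) :
    trivAx g X u x ∈ C0Ax S :=
  ⟨fun val => (pEval_imp val _ _).2 id, trivAx_inLuniq g X u x⟩

/-- The canonical enumeration of a finite type. -/
noncomputable def enumList (α : Type) [Fintype α] : List α := Finset.univ.toList

theorem enumList_nodup (α : Type) [Fintype α] : (enumList α).Nodup :=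
  Finset.nodup_toList _

theorem enumList_complete {α : Type} [Fintype α] (a : α) : a ∈ enumList α :=
  Finset.mem_toList.2 (Finset.mem_univ a)

/-- Parameter types for the axiom instance lists. -/
abbrev Par1 (S : Signature) : Type :=
  S.Intervention × S.Context × Σ X : S.V, S.valV X × S.valV X
abbrev Par2 (S : Signature) : Type := S.Intervention × S.Context × S.V
abbrev Par4 (S : Signature) : Type := S.Intervention × S.Context × Σ X : S.V, S.valV X
abbrev Par35 (S : Signature) : Type :=
  S.Intervention × S.Context × (Σ W : S.V, S.valV W) × (Σ Y : S.V, S.valV Y)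

noncomputable def mkAx1 : Par1 S → LPlus S := fun p =>
  if _ : p.2.2.2.1 = p.2.2.2.2 then trivAx p.1 p.2.2.1 p.2.1 p.2.2.2.1
  else (LPlus.box p.1 (IForm.atom p.2.2.1 p.2.1 p.2.2.2.1)).imp
    (LPlus.not (LPlus.box p.1 (IForm.atom p.2.2.1 p.2.1 p.2.2.2.2)))

noncomputable def mkAx2 : Par2 S → LPlus S := fun p =>
  match enumList (S.valV p.2.2) with
  | [] => trivAx p.1 p.2.2 p.2.1 (Classical.arbitrary _)
  | x :: l => (LPlus.box p.1 (IForm.atom p.2.2 p.2.1 x)).disj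
      (l.map fun y => LPlus.box p.1 (IForm.atom p.2.2 p.2.1 y))

noncomputable def mkAx3 : Par35 S → LPlus S := fun p =>
  if _ : p.1 p.2.2.1.1 = none ∧ p.1 p.2.2.2.1 = none ∧ p.2.2.1.1 ≠ p.2.2.2.1 then
    (LPlus.and (LPlus.box p.1 (IForm.atom p.2.2.1.1 p.2.1 p.2.2.1.2))
        (LPlus.box p.1 (IForm.atom p.2.2.2.1 p.2.1 p.2.2.2.2))).imp
      (LPlus.box (intUpdate p.1 p.2.2.1.1 p.2.2.1.2)
        (IForm.atom p.2.2.2.1 p.2.1 p.2.2.2.2))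
  else trivAx p.1 p.2.2.1.1 p.2.1 p.2.2.1.2

noncomputable def mkAx4 : Par4 S → LPlus S := fun p =>
  if _ : p.1 p.2.2.1 = some p.2.2.2 then LPlus.box p.1 (IForm.atom p.2.2.1 p.2.1 p.2.2.2)
  else trivAx p.1 p.2.2.1 p.2.1 p.2.2.2

noncomputable def mkAx5 : Par35 S → LPlus S := fun p =>
  if _ : p.1 p.2.2.1.1 = none ∧ p.1 p.2.2.2.1 = none ∧ p.2.2.1.1 ≠ p.2.2.2.1 then
    (LPlus.and
        (LPlus.box (intUpdate p.1 p.2.2.1.1 p.2.2.1.2)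
          (IForm.atom p.2.2.2.1 p.2.1 p.2.2.2.2))
        (LPlus.box (intUpdate p.1 p.2.2.2.1 p.2.2.2.2)
          (IForm.atom p.2.2.1.1 p.2.1 p.2.2.1.2))).imp
      (LPlus.box p.1 (IForm.atom p.2.2.2.1 p.2.1 p.2.2.2.2))
  else trivAx p.1 p.2.2.1.1 p.2.1 p.2.2.1.2

/-- The finite list of axiom instances used in the completeness proof. -/
noncomputable def axList (S : Signature) : List (LPlus S) :=
  ((enumList (Par1 S)).map mkAx1) ++ ((enumList (Par2 S)).map mkAx2) ++
  ((enumList (Par35 S)).map mkAx3) ++ ((enumList (Par4 S)).map mkAx4) ++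
  ((enumList (Par35 S)).map mkAx5)

theorem mkAx1_mem (p : Par1 S) : mkAx1 p ∈ AXuniq S := by
  unfold mkAx1
  split
  · exact mem_AXuniq_C0 (trivAx_mem _ _ _ _)
  · exact mem_AXuniq_C1 ⟨p.1, p.2.2.1, p.2.1, p.2.2.2.1, p.2.2.2.2, by assumption, rfl⟩

theorem mkAx2_mem (p : Par2 S) : mkAx2 p ∈ AXuniq S := by
  unfold mkAx2
  split
  · exact mem_AXuniq_C0 (trivAx_mem _ _ _ _)
  · next x l heq =>
      refine mem_AXuniq_C2 ⟨p.1, p.2.2, p.2.1, x, l, ?_, ?_, rfl⟩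
      · rw [← heq]; exact enumList_nodup _
      · intro y; rw [← heq]; exact enumList_complete y

theorem mkAx3_mem (p : Par35 S) : mkAx3 p ∈ AXuniq S := by
  unfold mkAx3
  split
  · next h =>
      exact mem_AXuniq_C3
        ⟨p.1, p.2.2.1.1, p.2.2.2.1, p.2.1, p.2.2.1.2, p.2.2.2.2, h.1, h.2.1, h.2.2, rfl⟩
  · exact mem_AXuniq_C0 (trivAx_mem _ _ _ _)

theorem mkAx4_mem (p : Par4 S) : mkAx4 p ∈ AXuniq S := by
  unfold mkAx4
  split
  · next h => exact mem_AXuniq_C4 ⟨p.1, p.2.2.1, p.2.1, p.2.2.2, h, rfl⟩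
  · exact mem_AXuniq_C0 (trivAx_mem _ _ _ _)

theorem mkAx5_mem (p : Par35 S) : mkAx5 p ∈ AXuniq S := by
  unfold mkAx5
  split
  · next h =>
      exact mem_AXuniq_C5
        ⟨p.1, p.2.2.1.1, p.2.2.2.1, p.2.1, p.2.2.1.2, p.2.2.2.2, h.1, h.2.1, h.2.2, rfl⟩
  · exact mem_AXuniq_C0 (trivAx_mem _ _ _ _)

theorem axList_mem {ψ : LPlus S} (h : ψ ∈ axList S) : ψ ∈ AXuniq S := by
  unfold axList at h
  simp only [List.mem_append, List.mem_map] at h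
  rcases h with ((((⟨p, -, rfl⟩ | ⟨p, -, rfl⟩) | ⟨p, -, rfl⟩) | ⟨p, -, rfl⟩) | ⟨p, -, rfl⟩)
  · exact mkAx1_mem p
  · exact mkAx2_mem p
  · exact mkAx3_mem p
  · exact mkAx4_mem p
  · exact mkAx5_mem p

theorem inLuniq_of_AXuniq {ψ : LPlus S} (h : ψ ∈ AXuniq S) : ψ.InLuniq := by
  rcases h with ((((h | h) | h) | h) | h) | h
  · exact h.2
  · obtain ⟨g, X, u, x, x', -, rfl⟩ := h
    exact ⟨⟨X, u, x, rfl⟩, ⟨X, u, x', rfl⟩⟩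
  · obtain ⟨g, X, u, x, l, -, -, rfl⟩ := h
    have : ∀ (a : LPlus S) (l' : List (LPlus S)), a.InLuniq →
        (∀ b ∈ l', b.InLuniq) → (a.disj l').InLuniq := by
      intro a l'
      induction l' generalizing a with
      | nil => intro ha _; exact ha
      | cons b t ihl =>
          intro ha hbt
          exact ⟨ha, ihl b (hbt b (List.mem_cons_self))
            (fun c hc => hbt c (List.mem_cons_of_mem b hc))⟩
    refine this _ _ ⟨X, u, x, rfl⟩ ?_
    intro b hb
    obtain ⟨y, -, rfl⟩ := List.mem_map.1 hb
    exact ⟨X, u, y, rfl⟩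
  · obtain ⟨g, W, Y, u, w, y, -, -, -, rfl⟩ := h
    exact ⟨⟨⟨W, u, w, rfl⟩, ⟨Y, u, y, rfl⟩⟩, ⟨Y, u, y, rfl⟩⟩
  · obtain ⟨g, X, u, x, -, rfl⟩ := h
    exact ⟨X, u, x, rfl⟩
  · obtain ⟨g, W, Y, u, w, y, -, -, -, rfl⟩ := h
    exact ⟨⟨⟨Y, u, y, rfl⟩, ⟨W, u, w, rfl⟩⟩, ⟨Y, u, y, rfl⟩⟩

/-- `ψ₁ ⇒ (ψ₂ ⇒ ( … ⇒ φ))`. -/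
def chainImp : List (LPlus S) → LPlus S → LPlus S
  | [], φ => φ
  | ψ :: l, φ => ψ.imp (chainImp l φ)

theorem pEval_chainImp (val : S.Intervention → IForm S → Prop) :
    ∀ (l : List (LPlus S)) (φ : LPlus S),
      (chainImp l φ).pEval val ↔ ((∀ ψ ∈ l, ψ.pEval val) → φ.pEval val)
  | [], φ => by simp [chainImp]
  | ψ :: l, φ => by
      show (ψ.imp (chainImp l φ)).pEval val ↔ _
      rw [pEval_imp, pEval_chainImp val l φ]
      constructor
      · intro h hall
        exact h (hall ψ (List.mem_cons_self)) (fun χ hχ => hall χ (List.mem_cons_of_mem ψ hχ))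
      · intro h h1 h2
        exact h (by
          intro χ hχ
          rcases List.mem_cons.1 hχ with rfl | hχ
          · exact h1
          · exact h2 χ hχ)

theorem inLuniq_chainImp : ∀ (l : List (LPlus S)) (φ : LPlus S),
    (∀ ψ ∈ l, ψ.InLuniq) → φ.InLuniq → (chainImp l φ).InLuniq
  | [], φ => fun _ h => h
  | ψ :: l, φ => fun hl h =>
      ⟨hl ψ (List.mem_cons_self),
        inLuniq_chainImp l φ (fun χ hχ => hl χ (List.mem_cons_of_mem ψ hχ)) h⟩

theorem provable_of_chainImp {Ax : Set (LPlus S)} :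
    ∀ (l : List (LPlus S)) (φ : LPlus S), Provable Ax (chainImp l φ) →
      (∀ ψ ∈ l, Provable Ax ψ) → Provable Ax φ
  | [], φ => fun h _ => h
  | ψ :: l, φ => fun h hall =>
      provable_of_chainImp l φ
        (Provable.mp h (hall ψ (List.mem_cons_self)))
        (fun χ hχ => hall χ (List.mem_cons_of_mem ψ hχ))

/-- For formulas of `L_uniq`, `pEval` only depends on the truth values of the atoms. -/
theorem pEval_congr_atoms {val val' : S.Intervention → IForm S → Prop}
    (h : ∀ (g : S.Intervention) (X : S.V) (u : S.Context) (x : S.valV X),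
      val g (IForm.atom X u x) ↔ val' g (IForm.atom X u x)) :
    ∀ φ : LPlus S, φ.InLuniq → (φ.pEval val ↔ φ.pEval val')
  | LPlus.box g ψ, hφ => by
      obtain ⟨X, u, x, rfl⟩ := hφ
      exact h g X u x
  | LPlus.not φ, hφ => by
      show ¬ φ.pEval val ↔ ¬ φ.pEval val'
      rw [pEval_congr_atoms h φ hφ]
  | LPlus.and φ ψ, hφ => by
      show φ.pEval val ∧ ψ.pEval val ↔ _ ∧ _
      rw [pEval_congr_atoms h φ hφ.1, pEval_congr_atoms h ψ hφ.2]
  | LPlus.or φ ψ, hφ => by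
      show φ.pEval val ∨ ψ.pEval val ↔ _ ∨ _
      rw [pEval_congr_atoms h φ hφ.1, pEval_congr_atoms h ψ hφ.2]

/-- From `pEval` of all the axiom instances in `axList`, extract a `GoodVal`. -/
theorem goodVal_of_axList {val : S.Intervention → IForm S → Prop}
    (hall : ∀ ψ ∈ axList S, ψ.pEval val) : GoodVal S val := by
  have mem1 : ∀ p : Par1 S, (mkAx1 p).pEval val := fun p =>
    hall _ (by
      unfold axList
      simp only [List.mem_append, List.mem_map]
      exact Or.inl (Or.inl (Or.inl (Or.inl ⟨p, enumList_complete p, rfl⟩))))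
  have mem2 : ∀ p : Par2 S, (mkAx2 p).pEval val := fun p =>
    hall _ (by
      unfold axList
      simp only [List.mem_append, List.mem_map]
      exact Or.inl (Or.inl (Or.inl (Or.inr ⟨p, enumList_complete p, rfl⟩))))
  have mem3 : ∀ p : Par35 S, (mkAx3 p).pEval val := fun p =>
    hall _ (by
      unfold axList
      simp only [List.mem_append, List.mem_map]
      exact Or.inl (Or.inl (Or.inr ⟨p, enumList_complete p, rfl⟩)))
  have mem4 : ∀ p : Par4 S, (mkAx4 p).pEval val := fun p =>
    hall _ (by
      unfold axList
      simp only [List.mem_append, List.mem_map]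
      exact Or.inl (Or.inr ⟨p, enumList_complete p, rfl⟩))
  have mem5 : ∀ p : Par35 S, (mkAx5 p).pEval val := fun p =>
    hall _ (by
      unfold axList
      simp only [List.mem_append, List.mem_map]
      exact Or.inr ⟨p, enumList_complete p, rfl⟩)
  constructor
  · -- h1
    intro g X u x x' hne h1 h2
    have := mem1 (g, u, ⟨X, x, x'⟩)
    rw [show mkAx1 ((g, u, ⟨X, x, x'⟩) : Par1 S) =
        (LPlus.box g (IForm.atom X u x)).imp
          (LPlus.not (LPlus.box g (IForm.atom X u x'))) by
      unfold mkAx1; exact dif_neg hne] at this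
    exact (pEval_imp val _ _).1 this h1 h2
  · -- h2
    intro g X u
    have := mem2 (g, u, X)
    unfold mkAx2 at this
    rcases heq : enumList (S.valV X) with _ | ⟨x, l⟩
    · exfalso
      have hx := enumList_complete (Classical.arbitrary (S.valV X))
      rw [heq] at hx
      exact absurd hx List.not_mem_nil
    · rw [heq] at this
      rcases (pEval_disj val _ _).1 this with h | ⟨b, hb, h⟩
      · exact ⟨x, h⟩
      · obtain ⟨y, -, rfl⟩ := List.mem_map.1 hb
        exact ⟨y, h⟩
  · -- h3
    intro g W Y u w y hgW hgY hWY h1 h2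
    have := mem3 (g, u, ⟨W, w⟩, ⟨Y, y⟩)
    rw [show mkAx3 ((g, u, ⟨W, w⟩, ⟨Y, y⟩) : Par35 S) =
        (LPlus.and (LPlus.box g (IForm.atom W u w)) (LPlus.box g (IForm.atom Y u y))).imp
          (LPlus.box (intUpdate g W w) (IForm.atom Y u y)) by
      unfold mkAx3; exact dif_pos ⟨hgW, hgY, hWY⟩] at this
    exact (pEval_imp val _ _).1 this ⟨h1, h2⟩
  · -- h4
    intro g X u x hg
    have := mem4 (g, u, ⟨X, x⟩)
    rw [show mkAx4 ((g, u, ⟨X, x⟩) : Par4 S) = LPlus.box g (IForm.atom X u x) by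
      unfold mkAx4; exact dif_pos hg] at this
    exact this
  · -- h5
    intro g W Y u w y hgW hgY hWY h1 h2
    have := mem5 (g, u, ⟨W, w⟩, ⟨Y, y⟩)
    rw [show mkAx5 ((g, u, ⟨W, w⟩, ⟨Y, y⟩) : Par35 S) =
        (LPlus.and (LPlus.box (intUpdate g W w) (IForm.atom Y u y))
            (LPlus.box (intUpdate g Y y) (IForm.atom W u w))).imp
          (LPlus.box g (IForm.atom Y u y)) by
      unfold mkAx5; exact dif_pos ⟨hgW, hgY, hWY⟩] at this
    exact (pEval_imp val _ _).1 this ⟨h1, h2⟩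

end Syntactic

/-- `AX_uniq(S)` is sound and complete for `L_uniq(S)` with respect to
`T_uniq(S)`: a formula of `L_uniq(S)` is provable in `AX_uniq(S)` iff it is true in
every causal model in `T_uniq(S)`. -/
theorem AXuniq_sound_and_complete (S : Signature) (hS : S.Standard)
    (φ : LPlus S) (hφ : φ.InLuniq) :
    Provable (AXuniq S) φ ↔ ∀ T : CausalModel S, T.UniqueSolutions → φ.sat T := by
  constructor
  · -- soundness
    intro hp T hT
    exact sat_of_provable hT hp
  · -- completeness
    intro hvalid
    have htaut : (chainImp (axList S) φ).Tautology := by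
      intro val
      rw [pEval_chainImp]
      intro hall
      have hgood : GoodVal S val := goodVal_of_axList hall
      have hsat := hvalid (mOf hgood) (mOf_uniqueSolutions hgood)
      rw [sat_iff_pEval] at hsat
      exact (pEval_congr_atoms
        (fun g X u x => (mOf_boxSat_atom hgood g X u x).symm) φ hφ).2 hsat
    have hC0 : chainImp (axList S) φ ∈ C0Ax S :=
      ⟨htaut, inLuniq_chainImp (axList S) φ
        (fun ψ hψ => inLuniq_of_AXuniq (axList_mem hψ)) hφ⟩
    exact provable_of_chainImp (axList S) φ
      (Provable.ax (mem_AXuniq_C0 hC0))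
      (fun ψ hψ => Provable.ax (axList_mem hψ))
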